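/- Let A be a d×d real symmetric positive definite matrix and D a d×d real symmetric positive semidefinite matrix. If there exists ε > 0 such that D ⪯ εI, then A^{-1} D (A+D)^{-1} A (A+D)^{-1} D A^{-1} ⪯ (ε²/(ε + λ_min(A))²) · A^{-1}, where λ_min(A) is the smallest eigenvalue of A. -/

import Mathlib

open scoped Classical

/-- The minimum eigenvalue of a (Hermitian) real matrix; junk value `0` otherwise. -/
noncomputable def minEig {d : ℕ} (M : Matrix (Fin d) (Fin d) ℝ) : ℝ :=
  if h : M.IsHermitian then ⨅ i, h.eigenvalues i else 0

namespace QErr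

variable {d : ℕ}

lemma psd_smul {M : Matrix (Fin d) (Fin d) ℝ} (hM : M.PosSemidef) {c : ℝ} (hc : 0 ≤ c) :
    (c • M).PosSemidef := by
  refine ⟨?_, fun x => ?_⟩
  · unfold Matrix.IsHermitian
    rw [Matrix.conjTranspose_smul, hM.1.eq]; simp
  · exact (hM.smul hc).2 x

lemma congr_psd {M B : Matrix (Fin d) (Fin d) ℝ} (hM : M.PosSemidef) (hB : B.IsHermitian) :
    (B * M * B).PosSemidef := by
  have := hM.mul_mul_conjTranspose_same B
  rwa [hB.eq] at this

lemma minEig_le {A : Matrix (Fin d) (Fin d) ℝ} (hA : A.IsHermitian) (i : Fin d) :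
    minEig A ≤ hA.eigenvalues i := by
  rw [minEig, dif_pos hA]
  exact ciInf_le (Finite.bddBelow_range _) i

lemma minEig_pos {A : Matrix (Fin d) (Fin d) ℝ} (hA : A.PosDef) (hd : 0 < d) :
    0 < minEig A := by
  have : Nonempty (Fin d) := ⟨⟨0, hd⟩⟩
  rw [minEig, dif_pos hA.1]
  obtain ⟨i, hi⟩ := Finite.exists_min hA.1.eigenvalues
  exact lt_of_lt_of_le (hA.eigenvalues_pos i) (le_ciInf hi)

lemma sub_minEig_psd {A : Matrix (Fin d) (Fin d) ℝ} (hA : A.IsHermitian) :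
    (A - minEig A • 1).PosSemidef := by
  set U : Matrix (Fin d) (Fin d) ℝ := (hA.eigenvectorUnitary : Matrix (Fin d) (Fin d) ℝ) with hU
  have hUU : U * star U = 1 := (Matrix.mem_unitaryGroup_iff).mp hA.eigenvectorUnitary.2
  have key : A - minEig A • 1
      = U * Matrix.diagonal (fun i => hA.eigenvalues i - minEig A) * star U := by
    have h1 : minEig A • (1 : Matrix (Fin d) (Fin d) ℝ)
        = U * (minEig A • 1) * star U := by
      rw [Matrix.mul_smul, Matrix.smul_mul, mul_one, hUU]
    calc A - minEig A • 1
        = U * Matrix.diagonal (RCLike.ofReal ∘ hA.eigenvalues) * star U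
          - U * (minEig A • 1) * star U := by
          rw [← h1]; congr 1; exact hA.spectral_theorem.trans (Unitary.conjStarAlgAut_apply _ _)
      _ = U * (Matrix.diagonal (RCLike.ofReal ∘ hA.eigenvalues) - minEig A • 1) * star U := by
          rw [Matrix.mul_sub, Matrix.sub_mul]
      _ = U * Matrix.diagonal (fun i => hA.eigenvalues i - minEig A) * star U := by
          congr 1
          congr 1
          rw [Matrix.smul_one_eq_diagonal, ← Matrix.diagonal_sub]
          congr 1
  rw [key, Matrix.star_eq_conjTranspose]
  exact (Matrix.posSemidef_diagonal_iff.mpr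
    (fun i => sub_nonneg.2 (minEig_le hA i))).mul_mul_conjTranspose_same U

lemma inv_minEig_psd {A : Matrix (Fin d) (Fin d) ℝ} (hA : A.PosDef) (hd : 0 < d) :
    ((minEig A)⁻¹ • 1 - A⁻¹).PosSemidef := by
  set l := minEig A with hl
  have hlpos := minEig_pos hA hd
  obtain ⟨S, hS, hSS⟩ : ∃ S : Matrix (Fin d) (Fin d) ℝ, S.PosSemidef ∧ S * S = A :=
    by open scoped MatrixOrder in
      exact ⟨CFC.sqrt A, Matrix.nonneg_iff_posSemidef.mp (CFC.sqrt_nonneg A), CFC.sqrt_mul_sqrt_self A hA.posSemidef.nonneg⟩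
  have hPA : A⁻¹ * A = 1 := Matrix.nonsing_inv_mul A ((Matrix.isUnit_iff_isUnit_det A).mp hA.isUnit)
  have hAP : A * A⁻¹ = 1 := Matrix.mul_nonsing_inv A ((Matrix.isUnit_iff_isUnit_det A).mp hA.isUnit)
  have inner1 : (S * (A - l • 1) * S).PosSemidef := congr_psd (sub_minEig_psd hA.1) hS.1
  have eq1 : S * (A - l • 1) * S = A * A - l • A := by
    have e1 : S * A * S = A * A := by rw [← hSS]; simp only [Matrix.mul_assoc]
    have e2 : S * (l • 1) * S = l • A := by
      rw [mul_smul_comm, smul_mul_assoc, mul_one, hSS]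
    rw [Matrix.mul_sub, Matrix.sub_mul, e1, e2]
  have outer : (A⁻¹ * (l⁻¹ • (A * A - l • A)) * A⁻¹).PosSemidef := by
    refine congr_psd (psd_smul ?_ (inv_nonneg.mpr hlpos.le)) hA.1.inv
    rw [← eq1]; exact inner1
  have eq2 : A⁻¹ * (l⁻¹ • (A * A - l • A)) * A⁻¹ = l⁻¹ • 1 - A⁻¹ := by
    rw [mul_smul_comm, smul_mul_assoc, Matrix.mul_sub, Matrix.sub_mul, mul_smul_comm,
      smul_mul_assoc, ← Matrix.mul_assoc, hPA, one_mul, hAP, one_mul, smul_sub, smul_smul,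
      inv_mul_cancel₀ hlpos.ne', one_smul]
  rwa [eq2] at outer

lemma eps_sub_sq_psd {D : Matrix (Fin d) (Fin d) ℝ} (hD : D.PosSemidef) {ε : ℝ}
    (hDI : (ε • (1 : Matrix (Fin d) (Fin d) ℝ) - D).PosSemidef) :
    (ε • D - D * D).PosSemidef := by
  obtain ⟨T, hT, hTT⟩ : ∃ T : Matrix (Fin d) (Fin d) ℝ, T.PosSemidef ∧ T * T = D :=
    by open scoped MatrixOrder in
      exact ⟨CFC.sqrt D, Matrix.nonneg_iff_posSemidef.mp (CFC.sqrt_nonneg D), CFC.sqrt_mul_sqrt_self D hD.nonneg⟩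
  have inner1 : (T * (ε • 1 - D) * T).PosSemidef := congr_psd hDI hT.1
  have eq1 : T * (ε • 1 - D) * T = ε • D - D * D := by
    have e1 : T * (ε • 1) * T = ε • D := by
      rw [mul_smul_comm, smul_mul_assoc, mul_one, hTT]
    have e2 : T * D * T = D * D := by rw [← hTT]; simp only [Matrix.mul_assoc]
    rw [Matrix.mul_sub, Matrix.sub_mul, e1, e2]
  rwa [eq1] at inner1

lemma key_identity (A D P Q : Matrix (Fin d) (Fin d) ℝ) (c : ℝ)
    (hAP : A * P = 1) (hPA : P * A = 1)
    (hBQ : (A + D) * Q = 1) (hQB : Q * (A + D) = 1) :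
    c • P - P * D * Q * A * Q * D * P
      = Q * (c • A + (2*c) • D - (1-c) • (D * P * D)) * Q := by
  have h5 : P * D * Q = P - Q := by
    have e : P * D = P * (A + D) - 1 := by rw [Matrix.mul_add, hPA, add_sub_cancel_left]
    rw [e, Matrix.sub_mul, one_mul, Matrix.mul_assoc, hBQ, mul_one]
  have h6 : Q * D * P = P - Q := by
    have e : D * P = (A + D) * P - 1 := by rw [Matrix.add_mul, hAP, add_sub_cancel_left]
    rw [Matrix.mul_assoc, e, Matrix.mul_sub, ← Matrix.mul_assoc, hQB, one_mul, mul_one]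
  have h9 : Q * D * Q = Q - Q * A * Q := by
    have e : Q * D = 1 - Q * A := by
      refine eq_sub_of_add_eq' ?_
      rw [← Matrix.mul_add, hQB]
    rw [e, Matrix.sub_mul, one_mul]
  have h8 : (P - Q) * A * (P - Q) = P - Q - (Q - Q * A * Q) := by
    rw [Matrix.sub_mul, Matrix.sub_mul, Matrix.mul_sub, Matrix.mul_sub, hPA, one_mul, one_mul,
      Matrix.mul_assoc Q A P, hAP, mul_one]
  have h7 : P * D * Q * A * Q * D * P = P - Q - (Q - Q * A * Q) := by
    rw [h5, Matrix.mul_assoc ((P - Q) * A) Q D, Matrix.mul_assoc ((P - Q) * A) (Q * D) P,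
      h6, h8]
  have h10 : Q * (D * P * D) * Q = P - Q - (Q - Q * A * Q) := by
    have : Q * (D * P * D) * Q = Q * D * P * D * Q := by
      simp only [Matrix.mul_assoc]
    rw [this, h6, Matrix.sub_mul, Matrix.sub_mul, h5, h9]
  rw [h7, Matrix.mul_sub, Matrix.mul_add, Matrix.sub_mul, Matrix.add_mul,
    mul_smul_comm, mul_smul_comm, mul_smul_comm, smul_mul_assoc, smul_mul_assoc, smul_mul_assoc,
    h9, h10]
  module

end QErr

/-- If `D ⪯ εI` with `A` positive definite and `D` positive semidefinite, then
`A⁻¹ D (A+D)⁻¹ A (A+D)⁻¹ D A⁻¹ ⪯ (ε²/(ε + λ_min(A))²) A⁻¹`. -/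
theorem quantization_error_upper_additive {d : ℕ}
    (A D : Matrix (Fin d) (Fin d) ℝ) (hA : A.PosDef) (hD : D.PosSemidef)
    (ε : ℝ) (hε : 0 < ε) (hDI : (ε • (1 : Matrix (Fin d) (Fin d) ℝ) - D).PosSemidef) :
    ((ε ^ 2 / (ε + minEig A) ^ 2) • A⁻¹
      - A⁻¹ * D * (A + D)⁻¹ * A * (A + D)⁻¹ * D * A⁻¹).PosSemidef := by
  rcases Nat.eq_zero_or_pos d with rfl | hd
  · exact ⟨Matrix.ext fun i => Fin.elim0 i, fun x => by simp [Subsingleton.elim x 0]⟩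
  set l := minEig A with hldef
  have hl : 0 < l := QErr.minEig_pos hA hd
  have hεl : 0 < ε + l := add_pos hε hl
  set c : ℝ := ε ^ 2 / (ε + l) ^ 2 with hcdef
  have hc0 : 0 ≤ c := by positivity
  have hc1 : c ≤ 1 := by
    rw [hcdef, div_le_one (by positivity)]
    nlinarith [hl.le, hε.le]
  have hBpd : (A + D).PosDef := hA.add_posSemidef hD
  have hPA : A⁻¹ * A = 1 :=
    Matrix.nonsing_inv_mul A ((Matrix.isUnit_iff_isUnit_det A).mp hA.isUnit)
  have hAP : A * A⁻¹ = 1 :=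
    Matrix.mul_nonsing_inv A ((Matrix.isUnit_iff_isUnit_det A).mp hA.isUnit)
  have hBQ : (A + D) * (A + D)⁻¹ = 1 :=
    Matrix.mul_nonsing_inv _ ((Matrix.isUnit_iff_isUnit_det _).mp hBpd.isUnit)
  have hQB : (A + D)⁻¹ * (A + D) = 1 :=
    Matrix.nonsing_inv_mul _ ((Matrix.isUnit_iff_isUnit_det _).mp hBpd.isUnit)
  -- PSD building blocks
  have p1 : (A - l • 1).PosSemidef := QErr.sub_minEig_psd hA.1
  have p2 : (l⁻¹ • 1 - A⁻¹).PosSemidef := QErr.inv_minEig_psd hA hd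
  have p3 : (ε • D - D * D).PosSemidef := QErr.eps_sub_sq_psd hD hDI
  have p4 : (D * (l⁻¹ • 1 - A⁻¹) * D).PosSemidef := QErr.congr_psd p2 hD.1
  -- the middle matrix is PSD
  have hM6 : (c • A + (2*c) • D - (1-c) • (D * A⁻¹ * D)).PosSemidef := by
    have hsum := ((QErr.psd_smul p1 hc0).add
        (QErr.psd_smul hDI (div_nonneg (mul_nonneg hc0 hl.le) hε.le))).add
      ((QErr.psd_smul p3 (div_nonneg (sub_nonneg.2 hc1) hl.le)).add
        (QErr.psd_smul p4 (sub_nonneg.2 hc1)))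
    have key : c • A + (2*c) • D - (1-c) • (D * A⁻¹ * D)
        = (c • (A - l • 1) + (c * l / ε) • (ε • (1 : Matrix (Fin d) (Fin d) ℝ) - D))
          + (((1-c)/l) • (ε • D - D * D) + (1-c) • (D * (l⁻¹ • 1 - A⁻¹) * D)) := by
      have expand : D * (l⁻¹ • 1 - A⁻¹) * D = l⁻¹ • (D * D) - D * A⁻¹ * D := by
        rw [Matrix.mul_sub, Matrix.sub_mul, mul_smul_comm, smul_mul_assoc, mul_one]
      rw [expand, hcdef]
      match_scalars <;> field_simp <;> ring
    rw [key]; exact hsum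
  have hId := QErr.key_identity A D A⁻¹ (A+D)⁻¹ c hAP hPA hBQ hQB
  rw [hId]
  exact QErr.congr_psd hM6 hBpd.1.inv
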